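/- For n > 2, if an optimal 2WCST for an instance of n keys is rooted at an equal-to test ⟨= i⟩, then i is a key of maximum weight, i.e., w_i ≥ w_k for all keys k. -/
import Mathlib


/-- Binary search trees with two-way comparisons (2WCST):
leaves are labelled by keys, internal nodes are equal-to tests `eqNode k yes no`
or less-than tests `ltNode k yes no` (yes-branch taken when `q = k`, resp. `q < k`). -/
inductive CTree where
  | leaf : ℕ → CTree
  | eqNode : ℕ → CTree → CTree → CTree
  | ltNode : ℕ → CTree → CTree → CTree
deriving DecidableEq

namespace CTree

/-- The key labelling the leaf reached by query `q`. -/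
def search : CTree → ℕ → ℕ
  | leaf k, _ => k
  | eqNode k y nb, q => if q = k then y.search q else nb.search q
  | ltNode k y nb, q => if q < k then y.search q else nb.search q

/-- The depth of the leaf reached by query `q`. -/
def searchDepth : CTree → ℕ → ℕ
  | leaf _, _ => 0
  | eqNode k y nb, q => (if q = k then y.searchDepth q else nb.searchDepth q) + 1
  | ltNode k y nb, q => (if q < k then y.searchDepth q else nb.searchDepth q) + 1

/-- All keys appearing in the tree (leaf labels and test keys). -/
def keys : CTree → Finset ℕ
  | leaf k => {k}
  | eqNode k y nb => insert k (y.keys ∪ nb.keys)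
  | ltNode k y nb => insert k (y.keys ∪ nb.keys)

/-- `T` is a valid 2WCST for the instance with key set `K = {1, …, n}`:
all keys used belong to `K` and every query `q ∈ K` reaches a leaf labelled `q`. -/
def ValidFor (n : ℕ) (T : CTree) : Prop :=
  T.keys ⊆ Finset.Icc 1 n ∧ ∀ q ∈ Finset.Icc 1 n, T.search q = q

/-- The cost of `T`: `∑_{k ∈ K} w_k · depth_T(k)`. -/
noncomputable def cost (w : ℕ → ℝ) (n : ℕ) (T : CTree) : ℝ :=
  ∑ k ∈ Finset.Icc 1 n, w k * T.searchDepth k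

/-- `T` is an optimal 2WCST for the instance. -/
noncomputable def OptimalFor (w : ℕ → ℝ) (n : ℕ) (T : CTree) : Prop :=
  ValidFor n T ∧ ∀ T' : CTree, ValidFor n T' → cost w n T ≤ cost w n T'

/-- `w(S)`: total weight of the keys labelling the leaves of a subtree. -/
noncomputable def wt (w : ℕ → ℝ) : CTree → ℝ
  | leaf k => w k
  | eqNode _ y nb => wt w y + wt w nb
  | ltNode _ y nb => wt w y + wt w nb

/-- The side-weight of a node. -/
noncomputable def sw (w : ℕ → ℝ) : CTree → ℝ
  | leaf _ => 0
  | eqNode k _ _ => w k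
  | ltNode _ y nb => min (wt w y) (wt w nb)

/-- `Occurs s T`: `s` occurs as a subtree (node) of `T`. -/
inductive Occurs : CTree → CTree → Prop
  | refl (t : CTree) : Occurs t t
  | eqYes {s k y nb} : Occurs s y → Occurs s (eqNode k y nb)
  | eqNo {s k y nb} : Occurs s nb → Occurs s (eqNode k y nb)
  | ltYes {s k y nb} : Occurs s y → Occurs s (ltNode k y nb)
  | ltNo {s k y nb} : Occurs s nb → Occurs s (ltNode k y nb)

/-- `v` is a child of node `u`. -/
def IsChildOf (v u : CTree) : Prop :=
  match u with
  | leaf _ => False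
  | eqNode _ y nb => v = y ∨ v = nb
  | ltNode _ y nb => v = y ∨ v = nb

/-- The root of the tree is an equal-to test. -/
def RootEq : CTree → Prop
  | eqNode _ _ _ => True
  | _ => False

/-- `ReplaceAt s t T T'`: `T'` is obtained from `T` by replacing one
occurrence of the subtree `s` by `t`, leaving the rest of `T` unchanged. -/
inductive ReplaceAt (s t : CTree) : CTree → CTree → Prop
  | here : ReplaceAt s t s t
  | eqYes {k y y' nb} : ReplaceAt s t y y' → ReplaceAt s t (eqNode k y nb) (eqNode k y' nb)
  | eqNo {k y nb nb'} : ReplaceAt s t nb nb' → ReplaceAt s t (eqNode k y nb) (eqNode k y nb')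
  | ltYes {k y y' nb} : ReplaceAt s t y y' → ReplaceAt s t (ltNode k y nb) (ltNode k y' nb)
  | ltNo {k y nb nb'} : ReplaceAt s t nb nb' → ReplaceAt s t (ltNode k y nb) (ltNode k y nb')

/-- Irreducibility relative to the set `Q` of queries that reach the current subtree:
every branch of every node is traversed by some query. -/
def IrredFrom : Finset ℕ → CTree → Prop
  | _, leaf _ => True
  | Q, eqNode k y nb =>
      (Q.filter (· = k)).Nonempty ∧ (Q.filter (· ≠ k)).Nonempty ∧
      IrredFrom (Q.filter (· = k)) y ∧ IrredFrom (Q.filter (· ≠ k)) nb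
  | Q, ltNode k y nb =>
      (Q.filter (· < k)).Nonempty ∧ (Q.filter (fun q => ¬ q < k)).Nonempty ∧
      IrredFrom (Q.filter (· < k)) y ∧ IrredFrom (Q.filter (fun q => ¬ q < k)) nb

/-- `T` is irreducible: no branch is redundant for the query set `{1, …, n}`. -/
def Irred (n : ℕ) (T : CTree) : Prop := IrredFrom (Finset.Icc 1 n) T

/-- The two kinds of comparison tests. -/
inductive TestKind where
  | eq : TestKind
  | lt : TestKind
deriving DecidableEq

/-- A test node `⟨? k⟩` on key `k` with `=/≥`-branch `hi` and `≠/<`-branch `lo`. -/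
def mkTest : TestKind → ℕ → CTree → CTree → CTree
  | .eq, k, hi, lo => eqNode k hi lo
  | .lt, k, hi, lo => ltNode k lo hi

/-- The `=/≥`-outcome of a test of kind `t` on key `b`, applied to query `q`. -/
def hiOutcome : TestKind → ℕ → ℕ → Prop
  | .eq, b, q => q = b
  | .lt, b, q => b ≤ q

instance (t : TestKind) (b q : ℕ) : Decidable (hiOutcome t b q) :=
  match t with
  | .eq => inferInstanceAs (Decidable (q = b))
  | .lt => inferInstanceAs (Decidable (b ≤ q))

/-- Number of leaves of a tree. -/
def numLeaves : CTree → ℕ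
  | leaf _ => 1
  | eqNode _ y nb => y.numLeaves + nb.numLeaves
  | ltNode _ y nb => y.numLeaves + nb.numLeaves

end CTree


/-! ### Auxiliary development for the proof -/

namespace CTreeAux
open CTree Finset

noncomputable def mass (w : ℕ → ℝ) (Q : Finset ℕ) : ℝ := ∑ q ∈ Q, w q

noncomputable def score (w : ℕ → ℝ) (Q : Finset ℕ) (U : CTree) : ℝ :=
  ∑ q ∈ Q, w q * (U.searchDepth q : ℝ)

/-- `U` is an optimal correct tree for the query set `Q`, among trees with keys in `K`. -/
def OptOn (w : ℕ → ℝ) (K Q : Finset ℕ) (U : CTree) : Prop :=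
  U.keys ⊆ K ∧ (∀ q ∈ Q, U.search q = q) ∧
  ∀ V : CTree, V.keys ⊆ K → (∀ q ∈ Q, V.search q = q) → score w Q U ≤ score w Q V

noncomputable def msw (w : ℕ → ℝ) (Q : Finset ℕ) : CTree → ℝ
  | .leaf _ => 0
  | .eqNode j _ _ => w j
  | .ltNode m _ _ =>
      min (mass w (Q.filter fun q => q < m)) (mass w (Q.filter fun q => ¬ q < m))

lemma searchDepth_eqN (j : ℕ) (A B : CTree) (q : ℕ) :
    (CTree.eqNode j A B).searchDepth q
      = (if q = j then A.searchDepth q else B.searchDepth q) + 1 := rfl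

lemma searchDepth_ltN (m : ℕ) (A B : CTree) (q : ℕ) :
    (CTree.ltNode m A B).searchDepth q
      = (if q < m then A.searchDepth q else B.searchDepth q) + 1 := rfl

lemma search_eqN (j : ℕ) (A B : CTree) (q : ℕ) :
    (CTree.eqNode j A B).search q = if q = j then A.search q else B.search q := rfl

lemma search_ltN (m : ℕ) (A B : CTree) (q : ℕ) :
    (CTree.ltNode m A B).search q = if q < m then A.search q else B.search q := rfl

lemma score_node (w : ℕ → ℝ) (Q : Finset ℕ) (p : ℕ → Prop) [DecidablePred p] (U A B : CTree)
    (h : ∀ q, U.searchDepth q = (if p q then A.searchDepth q else B.searchDepth q) + 1) :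
    score w Q U = score w (Q.filter p) A + score w (Q.filter fun q => ¬ p q) B + mass w Q := by
  unfold score mass
  rw [← Finset.sum_filter_add_sum_filter_not Q p (fun q => w q * (U.searchDepth q : ℝ)),
      ← Finset.sum_filter_add_sum_filter_not Q p (fun q => w q)]
  have h1 : ∑ q ∈ Q.filter p, w q * (U.searchDepth q : ℝ)
      = ∑ q ∈ Q.filter p, (w q * (A.searchDepth q : ℝ) + w q) := by
    refine Finset.sum_congr rfl fun q hq => ?_
    rw [h q, if_pos (Finset.mem_filter.mp hq).2]
    push_cast; ring
  have h2 : ∑ q ∈ Q.filter (fun q => ¬ p q), w q * (U.searchDepth q : ℝ)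
      = ∑ q ∈ Q.filter (fun q => ¬ p q), (w q * (B.searchDepth q : ℝ) + w q) := by
    refine Finset.sum_congr rfl fun q hq => ?_
    rw [h q, if_neg (Finset.mem_filter.mp hq).2]
    push_cast; ring
  rw [h1, h2, Finset.sum_add_distrib, Finset.sum_add_distrib]
  ring

lemma score_eqN (w : ℕ → ℝ) (Q : Finset ℕ) (j : ℕ) (A B : CTree) :
    score w Q (.eqNode j A B)
      = score w (Q.filter fun q => q = j) A
        + score w (Q.filter fun q => ¬ q = j) B + mass w Q :=
  score_node w Q (fun q => q = j) _ A B (fun _ => rfl)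

lemma score_ltN (w : ℕ → ℝ) (Q : Finset ℕ) (m : ℕ) (A B : CTree) :
    score w Q (.ltNode m A B)
      = score w (Q.filter fun q => q < m) A
        + score w (Q.filter fun q => ¬ q < m) B + mass w Q :=
  score_node w Q (fun q => q < m) _ A B (fun _ => rfl)

lemma mass_nonneg {w : ℕ → ℝ} {Q : Finset ℕ} (h : ∀ q ∈ Q, 0 ≤ w q) : 0 ≤ mass w Q :=
  Finset.sum_nonneg h

lemma score_nonneg {w : ℕ → ℝ} {Q : Finset ℕ} {U : CTree} (h : ∀ q ∈ Q, 0 ≤ w q) :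
    0 ≤ score w Q U :=
  Finset.sum_nonneg fun q hq => mul_nonneg (h q hq) (Nat.cast_nonneg _)

lemma le_mass {w : ℕ → ℝ} {Q : Finset ℕ} {k : ℕ} (hk : k ∈ Q) (h : ∀ q ∈ Q, 0 ≤ w q) :
    w k ≤ mass w Q :=
  Finset.single_le_sum h hk

lemma mass_split (w : ℕ → ℝ) (Q : Finset ℕ) (p : ℕ → Prop) [DecidablePred p] :
    mass w (Q.filter p) + mass w (Q.filter fun q => ¬ p q) = mass w Q :=
  Finset.sum_filter_add_sum_filter_not Q p w

lemma mass_filter_eq_of_mem {w : ℕ → ℝ} {Q : Finset ℕ} {j : ℕ} (hj : j ∈ Q) :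
    mass w (Q.filter fun q => q = j) = w j := by
  unfold mass; rw [Finset.filter_eq', if_pos hj, Finset.sum_singleton]

lemma mass_filter_eq_le {w : ℕ → ℝ} {Q : Finset ℕ} {j : ℕ} (hj : 0 ≤ w j) :
    mass w (Q.filter fun q => q = j) ≤ w j := by
  unfold mass; rw [Finset.filter_eq']
  split
  · rw [Finset.sum_singleton]
  · simpa using hj

lemma mass_erase_add {w : ℕ → ℝ} {Q : Finset ℕ} {k : ℕ} (hk : k ∈ Q) :
    mass w (Q.erase k) + w k = mass w Q :=
  Finset.sum_erase_add Q w hk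

lemma score_erase_add {w : ℕ → ℝ} {Q : Finset ℕ} {k : ℕ} {U : CTree} (hk : k ∈ Q) :
    score w (Q.erase k) U + w k * (U.searchDepth k : ℝ) = score w Q U :=
  Finset.sum_erase_add Q _ hk

lemma mass_empty (w : ℕ → ℝ) : mass w ∅ = 0 := Finset.sum_empty

lemma keys_eqN_sub {K : Finset ℕ} {j : ℕ} {A B : CTree}
    (h : (CTree.eqNode j A B).keys ⊆ K) : j ∈ K ∧ A.keys ⊆ K ∧ B.keys ⊆ K := by
  rw [CTree.keys, Finset.insert_subset_iff, Finset.union_subset_iff] at h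
  exact ⟨h.1, h.2.1, h.2.2⟩

lemma keys_ltN_sub {K : Finset ℕ} {m : ℕ} {A B : CTree}
    (h : (CTree.ltNode m A B).keys ⊆ K) : m ∈ K ∧ A.keys ⊆ K ∧ B.keys ⊆ K := by
  rw [CTree.keys, Finset.insert_subset_iff, Finset.union_subset_iff] at h
  exact ⟨h.1, h.2.1, h.2.2⟩

lemma keys_eqN_build {K : Finset ℕ} {j : ℕ} {A B : CTree}
    (hj : j ∈ K) (hA : A.keys ⊆ K) (hB : B.keys ⊆ K) : (CTree.eqNode j A B).keys ⊆ K := by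
  rw [CTree.keys, Finset.insert_subset_iff, Finset.union_subset_iff]
  exact ⟨hj, hA, hB⟩

lemma keys_ltN_build {K : Finset ℕ} {m : ℕ} {A B : CTree}
    (hm : m ∈ K) (hA : A.keys ⊆ K) (hB : B.keys ⊆ K) : (CTree.ltNode m A B).keys ⊆ K := by
  rw [CTree.keys, Finset.insert_subset_iff, Finset.union_subset_iff]
  exact ⟨hm, hA, hB⟩

lemma keys_leaf_build {K : Finset ℕ} {ℓ : ℕ} (h : ℓ ∈ K) : (CTree.leaf ℓ).keys ⊆ K := by
  rw [CTree.keys]; simpa using h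

/-! ### Subtree optimality descends to children -/

lemma OptOn_eq_no {w : ℕ → ℝ} {K Q : Finset ℕ} {j : ℕ} {S C : CTree}
    (h : OptOn w K Q (.eqNode j S C)) :
    OptOn w K (Q.filter fun q => ¬ q = j) C := by
  obtain ⟨hk, hv, hm⟩ := h
  obtain ⟨hjK, hS, hC⟩ := keys_eqN_sub hk
  refine ⟨hC, ?_, ?_⟩
  · intro q hq
    obtain ⟨hqQ, hqj⟩ := Finset.mem_filter.mp hq
    have := hv q hqQ
    rwa [search_eqN, if_neg hqj] at this
  · intro V hVk hVv
    have hVv' : ∀ q ∈ Q, (CTree.eqNode j S V).search q = q := by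
      intro q hqQ
      rw [search_eqN]
      by_cases hqj : q = j
      · rw [if_pos hqj]
        have := hv q hqQ
        rwa [search_eqN, if_pos hqj] at this
      · rw [if_neg hqj]
        exact hVv q (Finset.mem_filter.mpr ⟨hqQ, hqj⟩)
    have hineq := hm (.eqNode j S V) (keys_eqN_build hjK hS hVk) hVv'
    rw [score_eqN, score_eqN] at hineq
    linarith

lemma OptOn_lt_yes {w : ℕ → ℝ} {K Q : Finset ℕ} {m : ℕ} {A B : CTree}
    (h : OptOn w K Q (.ltNode m A B)) :
    OptOn w K (Q.filter fun q => q < m) A := by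
  obtain ⟨hk, hv, hm⟩ := h
  obtain ⟨hmK, hA, hB⟩ := keys_ltN_sub hk
  refine ⟨hA, ?_, ?_⟩
  · intro q hq
    obtain ⟨hqQ, hqm⟩ := Finset.mem_filter.mp hq
    have := hv q hqQ
    rwa [search_ltN, if_pos hqm] at this
  · intro V hVk hVv
    have hVv' : ∀ q ∈ Q, (CTree.ltNode m V B).search q = q := by
      intro q hqQ
      rw [search_ltN]
      by_cases hqm : q < m
      · rw [if_pos hqm]
        exact hVv q (Finset.mem_filter.mpr ⟨hqQ, hqm⟩)
      · rw [if_neg hqm]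
        have := hv q hqQ
        rwa [search_ltN, if_neg hqm] at this
    have hineq := hm (.ltNode m V B) (keys_ltN_build hmK hVk hB) hVv'
    rw [score_ltN, score_ltN] at hineq
    linarith

lemma OptOn_lt_no {w : ℕ → ℝ} {K Q : Finset ℕ} {m : ℕ} {A B : CTree}
    (h : OptOn w K Q (.ltNode m A B)) :
    OptOn w K (Q.filter fun q => ¬ q < m) B := by
  obtain ⟨hk, hv, hm⟩ := h
  obtain ⟨hmK, hA, hB⟩ := keys_ltN_sub hk
  refine ⟨hB, ?_, ?_⟩
  · intro q hq
    obtain ⟨hqQ, hqm⟩ := Finset.mem_filter.mp hq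
    have := hv q hqQ
    rwa [search_ltN, if_neg hqm] at this
  · intro V hVk hVv
    have hVv' : ∀ q ∈ Q, (CTree.ltNode m A V).search q = q := by
      intro q hqQ
      rw [search_ltN]
      by_cases hqm : q < m
      · rw [if_pos hqm]
        have := hv q hqQ
        rwa [search_ltN, if_pos hqm] at this
      · rw [if_neg hqm]
        exact hVv q (Finset.mem_filter.mpr ⟨hqQ, hqm⟩)
    have hineq := hm (.ltNode m A V) (keys_ltN_build hmK hA hVk) hVv'
    rw [score_ltN, score_ltN] at hineq
    linarith

/-! ### Assembly lemmas: lifting the removal construction from child to parent -/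

lemma erase_filter_of_not {Q : Finset ℕ} {k : ℕ} {p : ℕ → Prop} [DecidablePred p]
    (h : ¬ p k) : (Q.erase k).filter p = Q.filter p := by
  rw [Finset.filter_erase, Finset.erase_eq_of_notMem (fun hc => h (Finset.mem_filter.mp hc).2)]

lemma score_empty (w : ℕ → ℝ) (U : CTree) : score w ∅ U = 0 := Finset.sum_empty

lemma score_leaf (w : ℕ → ℝ) (Q : Finset ℕ) (ℓ : ℕ) : score w Q (.leaf ℓ) = 0 := by
  unfold score
  simp [CTree.searchDepth]

lemma assemble_eq {w : ℕ → ℝ} {K Q : Finset ℕ} {k j : ℕ} {c : ℝ} {S C C' : CTree}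
    (hkQ : k ∈ Q) (hkj : ¬ k = j)
    (hjK : j ∈ K) (hSK : S.keys ⊆ K)
    (hval : ∀ q ∈ Q, (CTree.eqNode j S C).search q = q)
    (hmassJ : mass w (Q.filter fun q => q = j) ≤ c)
    (hC'keys : C'.keys ⊆ K)
    (hC'val : ∀ q ∈ (Q.filter fun q => ¬ q = j).erase k, C'.search q = q)
    (hC'ineq : score w ((Q.filter fun q => ¬ q = j).erase k) C'
          + mass w ((Q.filter fun q => ¬ q = j).erase k)
        ≤ score w ((Q.filter fun q => ¬ q = j).erase k) C + ((C.searchDepth k : ℝ) - 1) * c) :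
    ∃ U' : CTree, U'.keys ⊆ K ∧ (∀ q ∈ Q.erase k, U'.search q = q) ∧
      1 ≤ (CTree.eqNode j S C).searchDepth k ∧
      score w (Q.erase k) U' + mass w (Q.erase k)
        ≤ score w (Q.erase k) (CTree.eqNode j S C)
          + (((CTree.eqNode j S C).searchDepth k : ℝ) - 1) * c := by
  refine ⟨CTree.eqNode j S C', keys_eqN_build hjK hSK hC'keys, ?_, ?_, ?_⟩
  · intro q hq
    obtain ⟨hqk, hqQ⟩ := Finset.mem_erase.mp hq
    rw [search_eqN]
    by_cases hqj : q = j
    · rw [if_pos hqj]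
      have := hval q hqQ
      rwa [search_eqN, if_pos hqj] at this
    · rw [if_neg hqj]
      exact hC'val q (Finset.mem_erase.mpr ⟨hqk, Finset.mem_filter.mpr ⟨hqQ, hqj⟩⟩)
  · rw [searchDepth_eqN, if_neg hkj]; omega
  · have hco : (Q.erase k).filter (fun q => q = j) = Q.filter (fun q => q = j) :=
      erase_filter_of_not hkj
    have hcc : (Q.erase k).filter (fun q => ¬ q = j) = (Q.filter fun q => ¬ q = j).erase k :=
      Finset.filter_erase (p := fun q => ¬ q = j) k Q
    have hms := mass_split w (Q.erase k) (fun q => q = j)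
    rw [hco, hcc] at hms
    rw [score_eqN, score_eqN, hco, hcc, searchDepth_eqN, if_neg hkj]
    have hcast : ((C.searchDepth k + 1 : ℕ) : ℝ) - 1 = ((C.searchDepth k : ℕ) : ℝ) := by
      push_cast; ring
    rw [hcast]
    linarith

lemma assemble_ltA {w : ℕ → ℝ} {K Q : Finset ℕ} {k m : ℕ} {c : ℝ} {A B C' : CTree}
    (hkQ : k ∈ Q) (hkm : k < m)
    (hmK : m ∈ K) (hBK : B.keys ⊆ K)
    (hval : ∀ q ∈ Q, (CTree.ltNode m A B).search q = q)
    (hmassS : mass w (Q.filter fun q => ¬ q < m) ≤ c)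
    (hC'keys : C'.keys ⊆ K)
    (hC'val : ∀ q ∈ (Q.filter fun q => q < m).erase k, C'.search q = q)
    (hC'ineq : score w ((Q.filter fun q => q < m).erase k) C'
          + mass w ((Q.filter fun q => q < m).erase k)
        ≤ score w ((Q.filter fun q => q < m).erase k) A + ((A.searchDepth k : ℝ) - 1) * c) :
    ∃ U' : CTree, U'.keys ⊆ K ∧ (∀ q ∈ Q.erase k, U'.search q = q) ∧
      1 ≤ (CTree.ltNode m A B).searchDepth k ∧
      score w (Q.erase k) U' + mass w (Q.erase k)
        ≤ score w (Q.erase k) (CTree.ltNode m A B)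
          + (((CTree.ltNode m A B).searchDepth k : ℝ) - 1) * c := by
  refine ⟨CTree.ltNode m C' B, keys_ltN_build hmK hC'keys hBK, ?_, ?_, ?_⟩
  · intro q hq
    obtain ⟨hqk, hqQ⟩ := Finset.mem_erase.mp hq
    rw [search_ltN]
    by_cases hqm : q < m
    · rw [if_pos hqm]
      exact hC'val q (Finset.mem_erase.mpr ⟨hqk, Finset.mem_filter.mpr ⟨hqQ, hqm⟩⟩)
    · rw [if_neg hqm]
      have := hval q hqQ
      rwa [search_ltN, if_neg hqm] at this
  · rw [searchDepth_ltN, if_pos hkm]; omega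
  · have hco : (Q.erase k).filter (fun q => ¬ q < m) = Q.filter (fun q => ¬ q < m) :=
      erase_filter_of_not (by omega)
    have hcc : (Q.erase k).filter (fun q => q < m) = (Q.filter fun q => q < m).erase k :=
      Finset.filter_erase (p := fun q => q < m) k Q
    have hms := mass_split w (Q.erase k) (fun q => q < m)
    rw [hco, hcc] at hms
    rw [score_ltN, score_ltN, hco, hcc, searchDepth_ltN, if_pos hkm]
    have hcast : ((A.searchDepth k + 1 : ℕ) : ℝ) - 1 = ((A.searchDepth k : ℕ) : ℝ) := by
      push_cast; ring
    rw [hcast]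
    linarith

lemma assemble_ltB {w : ℕ → ℝ} {K Q : Finset ℕ} {k m : ℕ} {c : ℝ} {A B C' : CTree}
    (hkQ : k ∈ Q) (hkm : ¬ k < m)
    (hmK : m ∈ K) (hAK : A.keys ⊆ K)
    (hval : ∀ q ∈ Q, (CTree.ltNode m A B).search q = q)
    (hmassS : mass w (Q.filter fun q => q < m) ≤ c)
    (hC'keys : C'.keys ⊆ K)
    (hC'val : ∀ q ∈ (Q.filter fun q => ¬ q < m).erase k, C'.search q = q)
    (hC'ineq : score w ((Q.filter fun q => ¬ q < m).erase k) C'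
          + mass w ((Q.filter fun q => ¬ q < m).erase k)
        ≤ score w ((Q.filter fun q => ¬ q < m).erase k) B + ((B.searchDepth k : ℝ) - 1) * c) :
    ∃ U' : CTree, U'.keys ⊆ K ∧ (∀ q ∈ Q.erase k, U'.search q = q) ∧
      1 ≤ (CTree.ltNode m A B).searchDepth k ∧
      score w (Q.erase k) U' + mass w (Q.erase k)
        ≤ score w (Q.erase k) (CTree.ltNode m A B)
          + (((CTree.ltNode m A B).searchDepth k : ℝ) - 1) * c := by
  refine ⟨CTree.ltNode m A C', keys_ltN_build hmK hAK hC'keys, ?_, ?_, ?_⟩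
  · intro q hq
    obtain ⟨hqk, hqQ⟩ := Finset.mem_erase.mp hq
    rw [search_ltN]
    by_cases hqm : q < m
    · rw [if_pos hqm]
      have := hval q hqQ
      rwa [search_ltN, if_pos hqm] at this
    · rw [if_neg hqm]
      exact hC'val q (Finset.mem_erase.mpr ⟨hqk, Finset.mem_filter.mpr ⟨hqQ, hqm⟩⟩)
  · rw [searchDepth_ltN, if_neg hkm]; omega
  · have hco : (Q.erase k).filter (fun q => q < m) = Q.filter (fun q => q < m) :=
      erase_filter_of_not (by omega)
    have hcc : (Q.erase k).filter (fun q => ¬ q < m) = (Q.filter fun q => ¬ q < m).erase k :=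
      Finset.filter_erase (p := fun q => ¬ q < m) k Q
    have hms := mass_split w (Q.erase k) (fun q => q < m)
    rw [hco, hcc] at hms
    rw [score_ltN, score_ltN, hco, hcc, searchDepth_ltN, if_neg hkm]
    have hcast : ((B.searchDepth k + 1 : ℕ) : ℝ) - 1 = ((B.searchDepth k : ℕ) : ℝ) := by
      push_cast; ring
    rw [hcast]
    linarith

/-! ### The main induction -/

lemma main_induction (w : ℕ → ℝ) (K : Finset ℕ) (hw : ∀ q ∈ K, 0 ≤ w q)
    (c : ℝ) (hc : 0 ≤ c) (k : ℕ) :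
    ∀ U : CTree, ∀ Q : Finset ℕ, Q ⊆ K → k ∈ Q → OptOn w K Q U → msw w Q U ≤ c →
      (∀ ℓ, U ≠ .leaf ℓ) →
      (w k ≤ c ∨
        ∃ U' : CTree, U'.keys ⊆ K ∧ (∀ q ∈ Q.erase k, U'.search q = q) ∧
          1 ≤ U.searchDepth k ∧
          score w (Q.erase k) U' + mass w (Q.erase k)
            ≤ score w (Q.erase k) U + ((U.searchDepth k : ℝ) - 1) * c) := by
  intro U
  induction U with
  | leaf ℓ => exact fun Q _ _ _ _ hnl => absurd rfl (hnl ℓ)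
  | eqNode j S C IHS IHC =>
    intro Q hQK hkQ hOpt hmsw _
    by_cases hkj : k = j
    · left
      subst hkj
      simpa [msw] using hmsw
    have hval := hOpt.2.1
    obtain ⟨hjK, hSK, hCK⟩ := keys_eqN_sub hOpt.1
    have hOptC : OptOn w K (Q.filter fun q => ¬ q = j) C := OptOn_eq_no hOpt
    have hkQC : k ∈ Q.filter (fun q => ¬ q = j) := Finset.mem_filter.mpr ⟨hkQ, hkj⟩
    have hQCK : (Q.filter fun q => ¬ q = j) ⊆ K := (Finset.filter_subset _ _).trans hQK
    have hwQC : ∀ q ∈ Q.filter (fun q => ¬ q = j), 0 ≤ w q := fun q hq => hw q (hQCK hq)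
    have hwj : 0 ≤ w j := hw j hjK
    have hmswj : w j ≤ c := by simpa [msw] using hmsw
    have hmassJ : mass w (Q.filter fun q => q = j) ≤ c :=
      le_trans (mass_filter_eq_le hwj) hmswj
    cases C with
    | leaf ℓ' =>
      have hlk : k = ℓ' := by
        have h0 := hOptC.2.1 k hkQC
        simp [CTree.search] at h0
        exact h0.symm
      subst hlk
      have hEj : ∀ q ∈ Q.erase k, q = j := by
        intro q hq
        obtain ⟨hqk, hqQ⟩ := Finset.mem_erase.mp hq
        by_contra hqj
        have h0 := hval q hqQ
        rw [search_eqN, if_neg hqj] at h0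
        simp [CTree.search] at h0
        exact hqk h0.symm
      right
      refine ⟨S, hSK, ?_, ?_, ?_⟩
      · intro q hq
        have hqj := hEj q hq
        subst hqj
        have h0 := hval q (Finset.mem_of_mem_erase hq)
        rwa [search_eqN, if_pos rfl] at h0
      · rw [searchDepth_eqN, if_neg hkj]; omega
      · rw [score_eqN]
        have h1 : (Q.erase k).filter (fun q => q = j) = Q.erase k :=
          Finset.filter_true_of_mem hEj
        have h2 : (Q.erase k).filter (fun q => ¬ q = j) = ∅ :=
          Finset.filter_false_of_mem (fun q hq => by simpa using hEj q hq)
        rw [h1, h2, score_empty, searchDepth_eqN, if_neg hkj]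
        simp [CTree.searchDepth]
    | eqNode j' S' C'' =>
      obtain ⟨hj'K, hS'K, hC''K⟩ := keys_eqN_sub hCK
      by_cases hj'QC : j' ∈ Q.filter (fun q => ¬ q = j)
      · -- live inner equality test: swap it with the outer one
        obtain ⟨hj'Q, hj'j⟩ := Finset.mem_filter.mp hj'QC
        have hVval : ∀ q ∈ Q, (CTree.eqNode j' S' (CTree.eqNode j S C'')).search q = q := by
          intro q hqQ
          have horig := hval q hqQ
          rw [search_eqN] at horig ⊢
          by_cases hqj' : q = j'
          · rw [if_pos hqj']
            rw [if_neg (by omega), search_eqN, if_pos hqj'] at horig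
            exact horig
          · rw [if_neg hqj', search_eqN]
            by_cases hqj : q = j
            · rw [if_pos hqj]; rwa [if_pos hqj] at horig
            · rw [if_neg hqj]
              rwa [if_neg hqj, search_eqN, if_neg hqj'] at horig
        have hineq := hOpt.2.2 _
          (keys_eqN_build hj'K hS'K (keys_eqN_build hjK hSK hC''K)) hVval
        rw [score_eqN w Q j S (CTree.eqNode j' S' C''),
            score_eqN w (Q.filter fun q => ¬ q = j) j' S' C'',
            score_eqN w Q j' S' (CTree.eqNode j S C''),
            score_eqN w (Q.filter fun q => ¬ q = j') j S C''] at hineq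
        have hs1 : (Q.filter fun q => ¬ q = j).filter (fun q => q = j')
            = Q.filter (fun q => q = j') := by
          rw [Finset.filter_filter]; exact Finset.filter_congr fun q _ => by omega
        have hs2 : (Q.filter fun q => ¬ q = j').filter (fun q => q = j)
            = Q.filter (fun q => q = j) := by
          rw [Finset.filter_filter]; exact Finset.filter_congr fun q _ => by omega
        have hs3 : (Q.filter fun q => ¬ q = j').filter (fun q => ¬ q = j)
            = (Q.filter fun q => ¬ q = j).filter (fun q => ¬ q = j') := by
          rw [Finset.filter_filter, Finset.filter_filter]
          exact Finset.filter_congr fun q _ => by omega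
        rw [hs1, hs2, hs3] at hineq
        have hm1 := mass_split w Q (fun q => q = j)
        have hm2 := mass_split w Q (fun q => q = j')
        have hmj' : mass w (Q.filter fun q => q = j') = w j' := mass_filter_eq_of_mem hj'Q
        have hmJle : mass w (Q.filter fun q => q = j) ≤ w j := mass_filter_eq_le hwj
        have hj'c : w j' ≤ c := by linarith
        have hrec := IHC (Q.filter fun q => ¬ q = j) hQCK hkQC hOptC
          (by simpa [msw] using hj'c) (fun ℓ h => CTree.noConfusion h)
        rcases hrec with h | ⟨C3, hk1, hk2, _, hk4⟩
        · exact Or.inl h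
        · exact Or.inr (assemble_eq hkQ hkj hjK hSK hval hmassJ hk1 hk2 hk4)
      · -- dead inner equality test: drop it
        have hVval : ∀ q ∈ Q, (CTree.eqNode j S C'').search q = q := by
          intro q hqQ
          have horig := hval q hqQ
          rw [search_eqN] at horig ⊢
          by_cases hqj : q = j
          · rwa [if_pos hqj] at horig ⊢
          · rw [if_neg hqj] at horig ⊢
            have hqj' : ¬ q = j' := fun h => hj'QC (h ▸ Finset.mem_filter.mpr ⟨hqQ, hqj⟩)
            rwa [search_eqN, if_neg hqj'] at horig
        have hineq := hOpt.2.2 _ (keys_eqN_build hjK hSK hC''K) hVval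
        rw [score_eqN w Q j S (CTree.eqNode j' S' C''),
            score_eqN w (Q.filter fun q => ¬ q = j) j' S' C'',
            score_eqN w Q j S C''] at hineq
        have h1 : (Q.filter fun q => ¬ q = j).filter (fun q => q = j') = ∅ := by
          rw [Finset.filter_eq', if_neg hj'QC]
        have h2 : (Q.filter fun q => ¬ q = j).filter (fun q => ¬ q = j')
            = Q.filter (fun q => ¬ q = j) :=
          Finset.filter_true_of_mem (fun q hq hq' => hj'QC (hq' ▸ hq))
        rw [h1, h2, score_empty] at hineq
        left
        have hkm := le_mass hkQC hwQC
        have hsn : 0 ≤ score w (Q.filter fun q => ¬ q = j) C'' := score_nonneg hwQC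
        linarith
    | ltNode m' A' B' =>
      obtain ⟨hm'K, hA'K, hB'K⟩ := keys_ltN_sub hCK
      have hbound : msw w (Q.filter fun q => ¬ q = j) (CTree.ltNode m' A' B') ≤ c := by
        by_cases hjm : j < m'
        · have hVval : ∀ q ∈ Q,
              (CTree.ltNode m' (CTree.eqNode j S A') B').search q = q := by
            intro q hqQ
            have horig := hval q hqQ
            rw [search_eqN] at horig
            rw [search_ltN]
            by_cases hqm : q < m'
            · rw [if_pos hqm, search_eqN]
              by_cases hqj : q = j
              · rw [if_pos hqj]; rwa [if_pos hqj] at horig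
              · rw [if_neg hqj]
                rwa [if_neg hqj, search_ltN, if_pos hqm] at horig
            · rw [if_neg hqm]
              have hqj : ¬ q = j := by omega
              rwa [if_neg hqj, search_ltN, if_neg hqm] at horig
          have hineq := hOpt.2.2 _
            (keys_ltN_build hm'K (keys_eqN_build hjK hSK hA'K) hB'K) hVval
          rw [score_eqN w Q j S (CTree.ltNode m' A' B'),
              score_ltN w (Q.filter fun q => ¬ q = j) m' A' B',
              score_ltN w Q m' (CTree.eqNode j S A') B',
              score_eqN w (Q.filter fun q => q < m') j S A'] at hineq
          have hs1 : (Q.filter fun q => q < m').filter (fun q => q = j)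
              = Q.filter (fun q => q = j) := by
            rw [Finset.filter_filter]; exact Finset.filter_congr fun q _ => by omega
          have hs2 : (Q.filter fun q => q < m').filter (fun q => ¬ q = j)
              = (Q.filter fun q => ¬ q = j).filter (fun q => q < m') := by
            rw [Finset.filter_filter, Finset.filter_filter]
            exact Finset.filter_congr fun q _ => by omega
          have hs3 : Q.filter (fun q => ¬ q < m')
              = (Q.filter fun q => ¬ q = j).filter (fun q => ¬ q < m') := by
            rw [Finset.filter_filter]; exact Finset.filter_congr fun q _ => by omega
          rw [hs1, hs2, hs3] at hineq
          have hm2 := mass_split w (Q.filter fun q => ¬ q = j) (fun q => q < m')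
          have hm3 := mass_split w (Q.filter fun q => q < m') (fun q => q = j)
          rw [hs1, hs2] at hm3
          simp only [msw]
          exact min_le_of_right_le (by linarith)
        · have hVval : ∀ q ∈ Q,
              (CTree.ltNode m' A' (CTree.eqNode j S B')).search q = q := by
            intro q hqQ
            have horig := hval q hqQ
            rw [search_eqN] at horig
            rw [search_ltN]
            by_cases hqm : q < m'
            · rw [if_pos hqm]
              have hqj : ¬ q = j := by omega
              rwa [if_neg hqj, search_ltN, if_pos hqm] at horig
            · rw [if_neg hqm, search_eqN]
              by_cases hqj : q = j
              · rw [if_pos hqj]; rwa [if_pos hqj] at horig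
              · rw [if_neg hqj]
                rwa [if_neg hqj, search_ltN, if_neg hqm] at horig
          have hineq := hOpt.2.2 _
            (keys_ltN_build hm'K hA'K (keys_eqN_build hjK hSK hB'K)) hVval
          rw [score_eqN w Q j S (CTree.ltNode m' A' B'),
              score_ltN w (Q.filter fun q => ¬ q = j) m' A' B',
              score_ltN w Q m' A' (CTree.eqNode j S B'),
              score_eqN w (Q.filter fun q => ¬ q < m') j S B'] at hineq
          have hs1 : (Q.filter fun q => ¬ q < m').filter (fun q => q = j)
              = Q.filter (fun q => q = j) := by
            rw [Finset.filter_filter]; exact Finset.filter_congr fun q _ => by omega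
          have hs2 : (Q.filter fun q => ¬ q < m').filter (fun q => ¬ q = j)
              = (Q.filter fun q => ¬ q = j).filter (fun q => ¬ q < m') := by
            rw [Finset.filter_filter, Finset.filter_filter]
            exact Finset.filter_congr fun q _ => by omega
          have hs3 : Q.filter (fun q => q < m')
              = (Q.filter fun q => ¬ q = j).filter (fun q => q < m') := by
            rw [Finset.filter_filter]; exact Finset.filter_congr fun q _ => by omega
          rw [hs1, hs2, hs3] at hineq
          have hm2 := mass_split w (Q.filter fun q => ¬ q = j) (fun q => q < m')
          have hm3 := mass_split w (Q.filter fun q => ¬ q < m') (fun q => q = j)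
          rw [hs1, hs2] at hm3
          simp only [msw]
          exact min_le_of_left_le (by linarith)
      have hrec := IHC (Q.filter fun q => ¬ q = j) hQCK hkQC hOptC hbound
        (fun ℓ h => CTree.noConfusion h)
      rcases hrec with h | ⟨C3, hk1, hk2, _, hk4⟩
      · exact Or.inl h
      · exact Or.inr (assemble_eq hkQ hkj hjK hSK hval hmassJ hk1 hk2 hk4)
  | ltNode m A B IHA IHB =>
    intro Q hQK hkQ hOpt hmsw _
    have hval := hOpt.2.1
    obtain ⟨hmK, hAK, hBK⟩ := keys_ltN_sub hOpt.1
    have hmsw' : min (mass w (Q.filter fun q => q < m))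
        (mass w (Q.filter fun q => ¬ q < m)) ≤ c := by simpa [msw] using hmsw
    by_cases hkm : k < m
    · -- k is on the yes side A
      have hkQC : k ∈ Q.filter (fun q => q < m) := Finset.mem_filter.mpr ⟨hkQ, hkm⟩
      have hQCK : (Q.filter fun q => q < m) ⊆ K := (Finset.filter_subset _ _).trans hQK
      have hwQC : ∀ q ∈ Q.filter (fun q => q < m), 0 ≤ w q := fun q hq => hw q (hQCK hq)
      rcases min_le_iff.mp hmsw' with hAle | hsig
      · exact Or.inl (le_trans (le_mass hkQC hwQC) hAle)
      have hOptA : OptOn w K (Q.filter fun q => q < m) A := OptOn_lt_yes hOpt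
      cases A with
      | leaf ℓ' =>
        have hlk : k = ℓ' := by
          have h0 := hOptA.2.1 k hkQC
          simp [CTree.search] at h0
          exact h0.symm
        subst hlk
        have hE : ∀ q ∈ Q.erase k, ¬ q < m := by
          intro q hq
          obtain ⟨hqk, hqQ⟩ := Finset.mem_erase.mp hq
          intro hqm
          have h0 := hval q hqQ
          rw [search_ltN, if_pos hqm] at h0
          simp [CTree.search] at h0
          exact hqk h0.symm
        right
        refine ⟨B, hBK, ?_, ?_, ?_⟩
        · intro q hq
          have hqm := hE q hq
          have h0 := hval q (Finset.mem_of_mem_erase hq)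
          rwa [search_ltN, if_neg hqm] at h0
        · rw [searchDepth_ltN, if_pos hkm]; omega
        · rw [score_ltN]
          have h1 : (Q.erase k).filter (fun q => q < m) = ∅ :=
            Finset.filter_false_of_mem hE
          have h2 : (Q.erase k).filter (fun q => ¬ q < m) = Q.erase k :=
            Finset.filter_true_of_mem hE
          rw [h1, h2, score_empty, searchDepth_ltN, if_pos hkm]
          simp [CTree.searchDepth]
      | eqNode j' S' C'' =>
        obtain ⟨hj'K, hS'K, hC''K⟩ := keys_eqN_sub hAK
        by_cases hj'QC : j' ∈ Q.filter (fun q => q < m)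
        · obtain ⟨hj'Q, hj'm⟩ := Finset.mem_filter.mp hj'QC
          have hVval : ∀ q ∈ Q,
              (CTree.eqNode j' S' (CTree.ltNode m C'' B)).search q = q := by
            intro q hqQ
            have horig := hval q hqQ
            rw [search_ltN] at horig
            rw [search_eqN]
            by_cases hqj' : q = j'
            · rw [if_pos hqj']
              rw [if_pos (by omega), search_eqN, if_pos hqj'] at horig
              exact horig
            · rw [if_neg hqj', search_ltN]
              by_cases hqm : q < m
              · rw [if_pos hqm]
                rwa [if_pos hqm, search_eqN, if_neg hqj'] at horig
              · rw [if_neg hqm]; rwa [if_neg hqm] at horig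
          have hineq := hOpt.2.2 _
            (keys_eqN_build hj'K hS'K (keys_ltN_build hmK hC''K hBK)) hVval
          rw [score_ltN w Q m (CTree.eqNode j' S' C'') B,
              score_eqN w (Q.filter fun q => q < m) j' S' C'',
              score_eqN w Q j' S' (CTree.ltNode m C'' B),
              score_ltN w (Q.filter fun q => ¬ q = j') m C'' B] at hineq
          have hs1 : (Q.filter fun q => q < m).filter (fun q => q = j')
              = Q.filter (fun q => q = j') := by
            rw [Finset.filter_filter]; exact Finset.filter_congr fun q _ => by omega
          have hs2 : (Q.filter fun q => ¬ q = j').filter (fun q => q < m)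
              = (Q.filter fun q => q < m).filter (fun q => ¬ q = j') := by
            rw [Finset.filter_filter, Finset.filter_filter]
            exact Finset.filter_congr fun q _ => by omega
          have hs3 : (Q.filter fun q => ¬ q = j').filter (fun q => ¬ q < m)
              = Q.filter (fun q => ¬ q < m) := by
            rw [Finset.filter_filter]; exact Finset.filter_congr fun q _ => by omega
          rw [hs1, hs2, hs3] at hineq
          have hm1 := mass_split w Q (fun q => q = j')
          have hm2 := mass_split w Q (fun q => q < m)
          have hmj' : mass w (Q.filter fun q => q = j') = w j' := mass_filter_eq_of_mem hj'Q
          have hj'c : w j' ≤ c := by linarith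
          have hrec := IHA (Q.filter fun q => q < m) hQCK hkQC hOptA
            (by simpa [msw] using hj'c) (fun ℓ h => CTree.noConfusion h)
          rcases hrec with h | ⟨C3, hk1, hk2, _, hk4⟩
          · exact Or.inl h
          · exact Or.inr (assemble_ltA hkQ hkm hmK hBK hval hsig hk1 hk2 hk4)
        · -- dead
          have hVval : ∀ q ∈ Q, (CTree.ltNode m C'' B).search q = q := by
            intro q hqQ
            have horig := hval q hqQ
            rw [search_ltN] at horig ⊢
            by_cases hqm : q < m
            · rw [if_pos hqm] at horig ⊢
              have hqj' : ¬ q = j' := fun h => hj'QC (h ▸ Finset.mem_filter.mpr ⟨hqQ, hqm⟩)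
              rwa [search_eqN, if_neg hqj'] at horig
            · rwa [if_neg hqm] at horig ⊢
          have hineq := hOpt.2.2 _ (keys_ltN_build hmK hC''K hBK) hVval
          rw [score_ltN w Q m (CTree.eqNode j' S' C'') B,
              score_eqN w (Q.filter fun q => q < m) j' S' C'',
              score_ltN w Q m C'' B] at hineq
          have h1 : (Q.filter fun q => q < m).filter (fun q => q = j') = ∅ := by
            rw [Finset.filter_eq', if_neg hj'QC]
          have h2 : (Q.filter fun q => q < m).filter (fun q => ¬ q = j')
              = Q.filter (fun q => q < m) :=
            Finset.filter_true_of_mem (fun q hq hq' => hj'QC (hq' ▸ hq))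
          rw [h1, h2, score_empty] at hineq
          left
          have hkm' := le_mass hkQC hwQC
          have hsn : 0 ≤ score w (Q.filter fun q => q < m) C'' := score_nonneg hwQC
          linarith
      | ltNode m' A' B' =>
        obtain ⟨hm'K, hA'K, hB'K⟩ := keys_ltN_sub hAK
        have hbound : msw w (Q.filter fun q => q < m) (CTree.ltNode m' A' B') ≤ c := by
          by_cases hmm : m ≤ m'
          · have hempty : (Q.filter fun q => q < m).filter (fun q => ¬ q < m') = ∅ :=
              Finset.filter_false_of_mem (fun q hq => by
                have := (Finset.mem_filter.mp hq).2
                omega)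
            simp only [msw]
            refine min_le_of_right_le ?_
            rw [hempty, mass_empty]
            exact hc
          · have hm'm : m' < m := by omega
            have hVval : ∀ q ∈ Q,
                (CTree.ltNode m' A' (CTree.ltNode m B' B)).search q = q := by
              intro q hqQ
              have horig := hval q hqQ
              rw [search_ltN] at horig
              rw [search_ltN]
              by_cases hqm' : q < m'
              · rw [if_pos hqm']
                rw [if_pos (by omega), search_ltN, if_pos hqm'] at horig
                exact horig
              · rw [if_neg hqm', search_ltN]
                by_cases hqm : q < m
                · rw [if_pos hqm]
                  rwa [if_pos hqm, search_ltN, if_neg hqm'] at horig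
                · rw [if_neg hqm]; rwa [if_neg hqm] at horig
            have hineq := hOpt.2.2 _
              (keys_ltN_build hm'K hA'K (keys_ltN_build hmK hB'K hBK)) hVval
            rw [score_ltN w Q m (CTree.ltNode m' A' B') B,
                score_ltN w (Q.filter fun q => q < m) m' A' B',
                score_ltN w Q m' A' (CTree.ltNode m B' B),
                score_ltN w (Q.filter fun q => ¬ q < m') m B' B] at hineq
            have hs1 : Q.filter (fun q => q < m')
                = (Q.filter fun q => q < m).filter (fun q => q < m') := by
              rw [Finset.filter_filter]; exact Finset.filter_congr fun q _ => by omega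
            have hs2 : (Q.filter fun q => ¬ q < m').filter (fun q => q < m)
                = (Q.filter fun q => q < m).filter (fun q => ¬ q < m') := by
              rw [Finset.filter_filter, Finset.filter_filter]
              exact Finset.filter_congr fun q _ => by omega
            have hs3 : (Q.filter fun q => ¬ q < m').filter (fun q => ¬ q < m)
                = Q.filter (fun q => ¬ q < m) := by
              rw [Finset.filter_filter]; exact Finset.filter_congr fun q _ => by omega
            rw [hs1, hs2, hs3] at hineq
            have hm2 := mass_split w (Q.filter fun q => q < m) (fun q => q < m')
            have hm3 := mass_split w (Q.filter fun q => ¬ q < m') (fun q => q < m)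
            rw [hs2, hs3] at hm3
            simp only [msw]
            exact min_le_of_left_le (by linarith)
        have hrec := IHA (Q.filter fun q => q < m) hQCK hkQC hOptA hbound
          (fun ℓ h => CTree.noConfusion h)
        rcases hrec with h | ⟨C3, hk1, hk2, _, hk4⟩
        · exact Or.inl h
        · exact Or.inr (assemble_ltA hkQ hkm hmK hBK hval hsig hk1 hk2 hk4)
    · -- k is on the no side B
      have hkQC : k ∈ Q.filter (fun q => ¬ q < m) := Finset.mem_filter.mpr ⟨hkQ, hkm⟩
      have hQCK : (Q.filter fun q => ¬ q < m) ⊆ K := (Finset.filter_subset _ _).trans hQK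
      have hwQC : ∀ q ∈ Q.filter (fun q => ¬ q < m), 0 ≤ w q := fun q hq => hw q (hQCK hq)
      by_cases hBle : mass w (Q.filter fun q => ¬ q < m) ≤ c
      · exact Or.inl (le_trans (le_mass hkQC hwQC) hBle)
      have hsig : mass w (Q.filter fun q => q < m) ≤ c := by
        rcases min_le_iff.mp hmsw' with h | h
        · exact h
        · exact absurd h hBle
      have hOptB : OptOn w K (Q.filter fun q => ¬ q < m) B := OptOn_lt_no hOpt
      cases B with
      | leaf ℓ' =>
        have hlk : k = ℓ' := by
          have h0 := hOptB.2.1 k hkQC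
          simp [CTree.search] at h0
          exact h0.symm
        subst hlk
        have hE : ∀ q ∈ Q.erase k, q < m := by
          intro q hq
          obtain ⟨hqk, hqQ⟩ := Finset.mem_erase.mp hq
          by_contra hqm
          have h0 := hval q hqQ
          rw [search_ltN, if_neg hqm] at h0
          simp [CTree.search] at h0
          exact hqk h0.symm
        right
        refine ⟨A, hAK, ?_, ?_, ?_⟩
        · intro q hq
          have hqm := hE q hq
          have h0 := hval q (Finset.mem_of_mem_erase hq)
          rwa [search_ltN, if_pos hqm] at h0
        · rw [searchDepth_ltN, if_neg hkm]; omega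
        · rw [score_ltN]
          have h1 : (Q.erase k).filter (fun q => q < m) = Q.erase k :=
            Finset.filter_true_of_mem hE
          have h2 : (Q.erase k).filter (fun q => ¬ q < m) = ∅ :=
            Finset.filter_false_of_mem (fun q hq => by simpa using hE q hq)
          rw [h1, h2, score_empty, searchDepth_ltN, if_neg hkm]
          simp [CTree.searchDepth]
      | eqNode j' S' C'' =>
        obtain ⟨hj'K, hS'K, hC''K⟩ := keys_eqN_sub hBK
        by_cases hj'QC : j' ∈ Q.filter (fun q => ¬ q < m)
        · obtain ⟨hj'Q, hj'm⟩ := Finset.mem_filter.mp hj'QC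
          have hVval : ∀ q ∈ Q,
              (CTree.eqNode j' S' (CTree.ltNode m A C'')).search q = q := by
            intro q hqQ
            have horig := hval q hqQ
            rw [search_ltN] at horig
            rw [search_eqN]
            by_cases hqj' : q = j'
            · rw [if_pos hqj']
              rw [if_neg (by omega), search_eqN, if_pos hqj'] at horig
              exact horig
            · rw [if_neg hqj', search_ltN]
              by_cases hqm : q < m
              · rw [if_pos hqm]; rwa [if_pos hqm] at horig
              · rw [if_neg hqm]
                rwa [if_neg hqm, search_eqN, if_neg hqj'] at horig
          have hineq := hOpt.2.2 _
            (keys_eqN_build hj'K hS'K (keys_ltN_build hmK hAK hC''K)) hVval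
          rw [score_ltN w Q m A (CTree.eqNode j' S' C''),
              score_eqN w (Q.filter fun q => ¬ q < m) j' S' C'',
              score_eqN w Q j' S' (CTree.ltNode m A C''),
              score_ltN w (Q.filter fun q => ¬ q = j') m A C''] at hineq
          have hs1 : (Q.filter fun q => ¬ q < m).filter (fun q => q = j')
              = Q.filter (fun q => q = j') := by
            rw [Finset.filter_filter]; exact Finset.filter_congr fun q _ => by omega
          have hs2 : (Q.filter fun q => ¬ q = j').filter (fun q => q < m)
              = Q.filter (fun q => q < m) := by
            rw [Finset.filter_filter]; exact Finset.filter_congr fun q _ => by omega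
          have hs3 : (Q.filter fun q => ¬ q = j').filter (fun q => ¬ q < m)
              = (Q.filter fun q => ¬ q < m).filter (fun q => ¬ q = j') := by
            rw [Finset.filter_filter, Finset.filter_filter]
            exact Finset.filter_congr fun q _ => by omega
          rw [hs1, hs2, hs3] at hineq
          have hm1 := mass_split w Q (fun q => q = j')
          have hm2 := mass_split w Q (fun q => q < m)
          have hmj' : mass w (Q.filter fun q => q = j') = w j' := mass_filter_eq_of_mem hj'Q
          have hj'c : w j' ≤ c := by linarith
          have hrec := IHB (Q.filter fun q => ¬ q < m) hQCK hkQC hOptB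
            (by simpa [msw] using hj'c) (fun ℓ h => CTree.noConfusion h)
          rcases hrec with h | ⟨C3, hk1, hk2, _, hk4⟩
          · exact Or.inl h
          · exact Or.inr (assemble_ltB hkQ hkm hmK hAK hval hsig hk1 hk2 hk4)
        · -- dead
          have hVval : ∀ q ∈ Q, (CTree.ltNode m A C'').search q = q := by
            intro q hqQ
            have horig := hval q hqQ
            rw [search_ltN] at horig ⊢
            by_cases hqm : q < m
            · rwa [if_pos hqm] at horig ⊢
            · rw [if_neg hqm] at horig ⊢
              have hqj' : ¬ q = j' := fun h => hj'QC (h ▸ Finset.mem_filter.mpr ⟨hqQ, hqm⟩)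
              rwa [search_eqN, if_neg hqj'] at horig
          have hineq := hOpt.2.2 _ (keys_ltN_build hmK hAK hC''K) hVval
          rw [score_ltN w Q m A (CTree.eqNode j' S' C''),
              score_eqN w (Q.filter fun q => ¬ q < m) j' S' C'',
              score_ltN w Q m A C''] at hineq
          have h1 : (Q.filter fun q => ¬ q < m).filter (fun q => q = j') = ∅ := by
            rw [Finset.filter_eq', if_neg hj'QC]
          have h2 : (Q.filter fun q => ¬ q < m).filter (fun q => ¬ q = j')
              = Q.filter (fun q => ¬ q < m) :=
            Finset.filter_true_of_mem (fun q hq hq' => hj'QC (hq' ▸ hq))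
          rw [h1, h2, score_empty] at hineq
          left
          have hkm' := le_mass hkQC hwQC
          have hsn : 0 ≤ score w (Q.filter fun q => ¬ q < m) C'' := score_nonneg hwQC
          linarith
      | ltNode m' A' B' =>
        obtain ⟨hm'K, hA'K, hB'K⟩ := keys_ltN_sub hBK
        have hbound : msw w (Q.filter fun q => ¬ q < m) (CTree.ltNode m' A' B') ≤ c := by
          by_cases hmm : m' ≤ m
          · have hempty : (Q.filter fun q => ¬ q < m).filter (fun q => q < m') = ∅ :=
              Finset.filter_false_of_mem (fun q hq => by
                have := (Finset.mem_filter.mp hq).2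
                omega)
            simp only [msw]
            refine min_le_of_left_le ?_
            rw [hempty, mass_empty]
            exact hc
          · have hm'm : m < m' := by omega
            have hVval : ∀ q ∈ Q,
                (CTree.ltNode m' (CTree.ltNode m A A') B').search q = q := by
              intro q hqQ
              have horig := hval q hqQ
              rw [search_ltN] at horig
              rw [search_ltN]
              by_cases hqm' : q < m'
              · rw [if_pos hqm', search_ltN]
                by_cases hqm : q < m
                · rw [if_pos hqm]; rwa [if_pos hqm] at horig
                · rw [if_neg hqm]
                  rwa [if_neg hqm, search_ltN, if_pos hqm'] at horig
              · rw [if_neg hqm']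
                rw [if_neg (by omega), search_ltN, if_neg hqm'] at horig
                exact horig
            have hineq := hOpt.2.2 _
              (keys_ltN_build hm'K (keys_ltN_build hmK hAK hA'K) hB'K) hVval
            rw [score_ltN w Q m A (CTree.ltNode m' A' B'),
                score_ltN w (Q.filter fun q => ¬ q < m) m' A' B',
                score_ltN w Q m' (CTree.ltNode m A A') B',
                score_ltN w (Q.filter fun q => q < m') m A A'] at hineq
            have hs1 : (Q.filter fun q => q < m').filter (fun q => q < m)
                = Q.filter (fun q => q < m) := by
              rw [Finset.filter_filter]; exact Finset.filter_congr fun q _ => by omega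
            have hs2 : (Q.filter fun q => q < m').filter (fun q => ¬ q < m)
                = (Q.filter fun q => ¬ q < m).filter (fun q => q < m') := by
              rw [Finset.filter_filter, Finset.filter_filter]
              exact Finset.filter_congr fun q _ => by omega
            have hs3 : Q.filter (fun q => ¬ q < m')
                = (Q.filter fun q => ¬ q < m).filter (fun q => ¬ q < m') := by
              rw [Finset.filter_filter]; exact Finset.filter_congr fun q _ => by omega
            rw [hs1, hs2, hs3] at hineq
            have hm2 := mass_split w (Q.filter fun q => ¬ q < m) (fun q => q < m')
            have hm3 := mass_split w (Q.filter fun q => q < m') (fun q => q < m)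
            rw [hs1, hs2] at hm3
            simp only [msw]
            exact min_le_of_right_le (by linarith)
        have hrec := IHB (Q.filter fun q => ¬ q < m) hQCK hkQC hOptB hbound
          (fun ℓ h => CTree.noConfusion h)
        rcases hrec with h | ⟨C3, hk1, hk2, _, hk4⟩
        · exact Or.inl h
        · exact Or.inr (assemble_ltB hkQ hkm hmK hAK hval hsig hk1 hk2 hk4)

end CTreeAux

open CTree in
/-- For `n > 2`, if an optimal 2WCST for an instance of `n` keys is rooted at an
equal-to test `⟨= i⟩`, then `i` is a key of maximum weight. -/
theorem root_eq_test_is_max_weight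
    (n : ℕ) (hn : 2 < n) (w : ℕ → ℝ) (hw : ∀ k ∈ Finset.Icc 1 n, 0 ≤ w k)
    (i : ℕ) (Y N : CTree)
    (hopt : OptimalFor w n (CTree.eqNode i Y N)) :
    ∀ k ∈ Finset.Icc 1 n, w k ≤ w i := by
  intro k hkK
  set K := Finset.Icc 1 n with hKdef
  have hTkeys : (CTree.eqNode i Y N).keys ⊆ K := hopt.1.1
  obtain ⟨hiK, hYK, hNK⟩ := CTreeAux.keys_eqN_sub hTkeys
  have hwi : 0 ≤ w i := hw i hiK
  by_cases hki : k = i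
  · subst hki; exact le_refl _
  have hOptT : CTreeAux.OptOn w K K (CTree.eqNode i Y N) := by
    refine ⟨hTkeys, hopt.1.2, ?_⟩
    intro V hVk hVv
    exact hopt.2 V ⟨hVk, hVv⟩
  have hOptN : CTreeAux.OptOn w K (K.filter fun q => ¬ q = i) N := CTreeAux.OptOn_eq_no hOptT
  have hkQ1 : k ∈ K.filter (fun q => ¬ q = i) := Finset.mem_filter.mpr ⟨hkK, hki⟩
  have hQ1K : (K.filter fun q => ¬ q = i) ⊆ K := Finset.filter_subset _ _
  have hwQ1 : ∀ q ∈ K.filter (fun q => ¬ q = i), 0 ≤ w q := fun q hq => hw q (hQ1K hq)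
  have hscY : 0 ≤ CTreeAux.score w (K.filter fun q => q = i) Y :=
    CTreeAux.score_nonneg (fun q hq => hw q (Finset.filter_subset _ _ hq))
  -- `N` is not a leaf (it answers at least two distinct queries)
  have hNleaf : ∀ ℓ, N ≠ CTree.leaf ℓ := by
    intro ℓ hNeq
    have hmem : ∀ a, a ∈ K → ¬ a = i → a = ℓ := by
      intro a ha hai
      have h0 := hOptN.2.1 a (Finset.mem_filter.mpr ⟨ha, hai⟩)
      rw [hNeq] at h0
      simp [CTree.search] at h0
      exact h0.symm
    have h1 : (1:ℕ) ∈ K := by simp [hKdef, Finset.mem_Icc]; omega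
    have h2 : (2:ℕ) ∈ K := by simp [hKdef, Finset.mem_Icc]; omega
    have h3 : (3:ℕ) ∈ K := by simp [hKdef, Finset.mem_Icc]; omega
    by_cases hi1 : i = 1
    · have e2 := hmem 2 h2 (by omega); have e3 := hmem 3 h3 (by omega); omega
    by_cases hi2 : i = 2
    · have e1 := hmem 1 h1 (by omega); have e3 := hmem 3 h3 (by omega); omega
    have e1 := hmem 1 h1 (by omega); have e2 := hmem 2 h2 (by omega); omega
  have hiQ1 : i ∉ K.filter (fun q => ¬ q = i) := by simp
  -- Link 0 : the first `msw` bound, at the root of `N`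
  have hlink0 : w k ≤ w i ∨ CTreeAux.msw w (K.filter fun q => ¬ q = i) N ≤ w i := by
    cases hN : N with
    | leaf ℓ => exact absurd hN (hNleaf ℓ)
    | eqNode j A B =>
      rw [hN] at hNK hOptN
      obtain ⟨hjK, hAK2, hBK2⟩ := CTreeAux.keys_eqN_sub hNK
      by_cases hji : j = i
      · subst hji
        have hVval : ∀ q ∈ K, (CTree.eqNode j (CTree.leaf j) B).search q = q := by
          intro q hqK
          rw [CTreeAux.search_eqN]
          by_cases hqj : q = j
          · rw [if_pos hqj, hqj]; rfl
          · rw [if_neg hqj]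
            have horig := hOptT.2.1 q hqK
            rw [hN] at horig
            rwa [CTreeAux.search_eqN, if_neg hqj, CTreeAux.search_eqN, if_neg hqj] at horig
        have hineq := hOptT.2.2 _
          (CTreeAux.keys_eqN_build hiK (CTreeAux.keys_leaf_build hiK) hBK2) hVval
        rw [hN] at hineq
        rw [CTreeAux.score_eqN w K j Y (CTree.eqNode j A B),
            CTreeAux.score_eqN w (K.filter fun q => ¬ q = j) j A B,
            CTreeAux.score_eqN w K j (CTree.leaf j) B] at hineq
        have h1 : (K.filter fun q => ¬ q = j).filter (fun q => q = j) = ∅ := by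
          rw [Finset.filter_eq', if_neg hiQ1]
        have h2 : (K.filter fun q => ¬ q = j).filter (fun q => ¬ q = j)
            = K.filter (fun q => ¬ q = j) :=
          Finset.filter_true_of_mem (fun q hq => (Finset.mem_filter.mp hq).2)
        rw [h1, h2, CTreeAux.score_empty, CTreeAux.score_leaf] at hineq
        left
        have hkm := CTreeAux.le_mass hkQ1 hwQ1
        linarith
      · have hjQ1 : j ∈ K.filter (fun q => ¬ q = i) := Finset.mem_filter.mpr ⟨hjK, hji⟩
        have hVval : ∀ q ∈ K,
            (CTree.eqNode j A (CTree.eqNode i (CTree.leaf i) B)).search q = q := by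
          intro q hqK
          have horig := hOptT.2.1 q hqK
          rw [hN, CTreeAux.search_eqN] at horig
          rw [CTreeAux.search_eqN]
          by_cases hqj : q = j
          · rw [if_pos hqj]
            rw [if_neg (by omega), CTreeAux.search_eqN, if_pos hqj] at horig
            exact horig
          · rw [if_neg hqj, CTreeAux.search_eqN]
            by_cases hqi : q = i
            · rw [if_pos hqi, hqi]; rfl
            · rw [if_neg hqi]
              rwa [if_neg hqi, CTreeAux.search_eqN, if_neg hqj] at horig
        have hineq := hOptT.2.2 _
          (CTreeAux.keys_eqN_build hjK hAK2
            (CTreeAux.keys_eqN_build hiK (CTreeAux.keys_leaf_build hiK) hBK2)) hVval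
        rw [hN] at hineq
        rw [CTreeAux.score_eqN w K i Y (CTree.eqNode j A B),
            CTreeAux.score_eqN w (K.filter fun q => ¬ q = i) j A B,
            CTreeAux.score_eqN w K j A (CTree.eqNode i (CTree.leaf i) B),
            CTreeAux.score_eqN w (K.filter fun q => ¬ q = j) i (CTree.leaf i) B] at hineq
        have hs1 : (K.filter fun q => ¬ q = i).filter (fun q => q = j)
            = K.filter (fun q => q = j) := by
          rw [Finset.filter_filter]; exact Finset.filter_congr fun q _ => by omega
        have hs2 : (K.filter fun q => ¬ q = j).filter (fun q => ¬ q = i)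
            = (K.filter fun q => ¬ q = i).filter (fun q => ¬ q = j) := by
          rw [Finset.filter_filter, Finset.filter_filter]
          exact Finset.filter_congr fun q _ => by omega
        rw [hs1, hs2, CTreeAux.score_leaf] at hineq
        have hm1 := CTreeAux.mass_split w K (fun q => q = i)
        have hm2 := CTreeAux.mass_split w K (fun q => q = j)
        have hmi : CTreeAux.mass w (K.filter fun q => q = i) = w i :=
          CTreeAux.mass_filter_eq_of_mem hiK
        have hmj : CTreeAux.mass w (K.filter fun q => q = j) = w j :=
          CTreeAux.mass_filter_eq_of_mem hjK
        have hm3 := CTreeAux.mass_split w (K.filter fun q => ¬ q = i) (fun q => q = j)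
        rw [hs1] at hm3
        right
        simp only [CTreeAux.msw]
        linarith
    | ltNode m A B =>
      rw [hN] at hNK hOptN
      obtain ⟨hmK, hAK2, hBK2⟩ := CTreeAux.keys_ltN_sub hNK
      by_cases him : i < m
      · have hVval : ∀ q ∈ K,
            (CTree.ltNode m (CTree.eqNode i (CTree.leaf i) A) B).search q = q := by
          intro q hqK
          have horig := hOptT.2.1 q hqK
          rw [hN, CTreeAux.search_eqN] at horig
          rw [CTreeAux.search_ltN]
          by_cases hqm : q < m
          · rw [if_pos hqm, CTreeAux.search_eqN]
            by_cases hqi : q = i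
            · rw [if_pos hqi, hqi]; rfl
            · rw [if_neg hqi]
              rwa [if_neg hqi, CTreeAux.search_ltN, if_pos hqm] at horig
          · rw [if_neg hqm]
            have hqi : ¬ q = i := by omega
            rwa [if_neg hqi, CTreeAux.search_ltN, if_neg hqm] at horig
        have hineq := hOptT.2.2 _
          (CTreeAux.keys_ltN_build hmK
            (CTreeAux.keys_eqN_build hiK (CTreeAux.keys_leaf_build hiK) hAK2) hBK2) hVval
        rw [hN] at hineq
        rw [CTreeAux.score_eqN w K i Y (CTree.ltNode m A B),
            CTreeAux.score_ltN w (K.filter fun q => ¬ q = i) m A B,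
            CTreeAux.score_ltN w K m (CTree.eqNode i (CTree.leaf i) A) B,
            CTreeAux.score_eqN w (K.filter fun q => q < m) i (CTree.leaf i) A] at hineq
        have hs1 : (K.filter fun q => q < m).filter (fun q => ¬ q = i)
            = (K.filter fun q => ¬ q = i).filter (fun q => q < m) := by
          rw [Finset.filter_filter, Finset.filter_filter]
          exact Finset.filter_congr fun q _ => by omega
        have hs2 : K.filter (fun q => ¬ q < m)
            = (K.filter fun q => ¬ q = i).filter (fun q => ¬ q < m) := by
          rw [Finset.filter_filter]; exact Finset.filter_congr fun q _ => by omega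
        rw [hs1, hs2, CTreeAux.score_leaf] at hineq
        have hm1 := CTreeAux.mass_split w K (fun q => q = i)
        have hmi : CTreeAux.mass w (K.filter fun q => q = i) = w i :=
          CTreeAux.mass_filter_eq_of_mem hiK
        have hm2 := CTreeAux.mass_split w (K.filter fun q => ¬ q = i) (fun q => q < m)
        have hm3 := CTreeAux.mass_split w (K.filter fun q => q < m) (fun q => q = i)
        have hs3 : (K.filter fun q => q < m).filter (fun q => q = i)
            = K.filter (fun q => q = i) := by
          rw [Finset.filter_filter]; exact Finset.filter_congr fun q _ => by omega
        rw [hs3, hs1] at hm3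
        right
        simp only [CTreeAux.msw]
        exact min_le_of_right_le (by linarith)
      · have hVval : ∀ q ∈ K,
            (CTree.ltNode m A (CTree.eqNode i (CTree.leaf i) B)).search q = q := by
          intro q hqK
          have horig := hOptT.2.1 q hqK
          rw [hN, CTreeAux.search_eqN] at horig
          rw [CTreeAux.search_ltN]
          by_cases hqm : q < m
          · rw [if_pos hqm]
            have hqi : ¬ q = i := by omega
            rwa [if_neg hqi, CTreeAux.search_ltN, if_pos hqm] at horig
          · rw [if_neg hqm, CTreeAux.search_eqN]
            by_cases hqi : q = i
            · rw [if_pos hqi, hqi]; rfl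
            · rw [if_neg hqi]
              rwa [if_neg hqi, CTreeAux.search_ltN, if_neg hqm] at horig
        have hineq := hOptT.2.2 _
          (CTreeAux.keys_ltN_build hmK hAK2
            (CTreeAux.keys_eqN_build hiK (CTreeAux.keys_leaf_build hiK) hBK2)) hVval
        rw [hN] at hineq
        rw [CTreeAux.score_eqN w K i Y (CTree.ltNode m A B),
            CTreeAux.score_ltN w (K.filter fun q => ¬ q = i) m A B,
            CTreeAux.score_ltN w K m A (CTree.eqNode i (CTree.leaf i) B),
            CTreeAux.score_eqN w (K.filter fun q => ¬ q < m) i (CTree.leaf i) B] at hineq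
        have hs1 : (K.filter fun q => ¬ q < m).filter (fun q => ¬ q = i)
            = (K.filter fun q => ¬ q = i).filter (fun q => ¬ q < m) := by
          rw [Finset.filter_filter, Finset.filter_filter]
          exact Finset.filter_congr fun q _ => by omega
        have hs2 : K.filter (fun q => q < m)
            = (K.filter fun q => ¬ q = i).filter (fun q => q < m) := by
          rw [Finset.filter_filter]; exact Finset.filter_congr fun q _ => by omega
        rw [hs1, hs2, CTreeAux.score_leaf] at hineq
        have hm1 := CTreeAux.mass_split w K (fun q => q = i)
        have hmi : CTreeAux.mass w (K.filter fun q => q = i) = w i :=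
          CTreeAux.mass_filter_eq_of_mem hiK
        have hm2 := CTreeAux.mass_split w (K.filter fun q => ¬ q = i) (fun q => q < m)
        have hm3 := CTreeAux.mass_split w (K.filter fun q => ¬ q < m) (fun q => q = i)
        have hs3 : (K.filter fun q => ¬ q < m).filter (fun q => q = i)
            = K.filter (fun q => q = i) := by
          rw [Finset.filter_filter]; exact Finset.filter_congr fun q _ => by omega
        rw [hs3, hs1] at hm3
        right
        simp only [CTreeAux.msw]
        exact min_le_of_left_le (by linarith)
  rcases hlink0 with hdone | hmsw0
  · exact hdone
  -- run the main induction on N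
  have hmain := CTreeAux.main_induction w K hw (w i) hwi k N
    (K.filter fun q => ¬ q = i) hQ1K hkQ1 hOptN hmsw0 hNleaf
  rcases hmain with hdone | ⟨N', hN'keys, hN'val, hd1, hN'ineq⟩
  · exact hdone
  -- final exchange : promote `k` to the root, keep the equality test on `i` below it
  have hVval : ∀ q ∈ K,
      (CTree.eqNode k (CTree.leaf k) (CTree.eqNode i (CTree.leaf i) N')).search q = q := by
    intro q hqK
    rw [CTreeAux.search_eqN]
    by_cases hqk : q = k
    · rw [if_pos hqk, hqk]; rfl
    · rw [if_neg hqk, CTreeAux.search_eqN]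
      by_cases hqi : q = i
      · rw [if_pos hqi, hqi]; rfl
      · rw [if_neg hqi]
        exact hN'val q (Finset.mem_erase.mpr ⟨hqk, Finset.mem_filter.mpr ⟨hqK, hqi⟩⟩)
  have hineq := hOptT.2.2 _
    (CTreeAux.keys_eqN_build hkK (CTreeAux.keys_leaf_build hkK)
      (CTreeAux.keys_eqN_build hiK (CTreeAux.keys_leaf_build hiK) hN'keys)) hVval
  rw [CTreeAux.score_eqN w K i Y N,
      CTreeAux.score_eqN w K k (CTree.leaf k) (CTree.eqNode i (CTree.leaf i) N'),
      CTreeAux.score_eqN w (K.filter fun q => ¬ q = k) i (CTree.leaf i) N'] at hineq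
  rw [CTreeAux.score_leaf, CTreeAux.score_leaf] at hineq
  have hs1 : (K.filter fun q => ¬ q = k).filter (fun q => ¬ q = i)
      = (K.filter fun q => ¬ q = i).erase k := by
    ext q
    simp only [Finset.mem_filter, Finset.mem_erase, Ne]
    tauto
  rw [hs1] at hineq
  -- split the score of `N` at `k`
  have hsplitN := CTreeAux.score_erase_add (w := w) (U := N) hkQ1
  have hmQ1 := CTreeAux.mass_erase_add (w := w) hkQ1
  have hmK1 := CTreeAux.mass_split w K (fun q => q = i)
  have hmi : CTreeAux.mass w (K.filter fun q => q = i) = w i :=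
    CTreeAux.mass_filter_eq_of_mem hiK
  have hmK2 := CTreeAux.mass_split w K (fun q => q = k)
  have hmk : CTreeAux.mass w (K.filter fun q => q = k) = w k :=
    CTreeAux.mass_filter_eq_of_mem hkK
  have hmKk : (K.filter fun q => ¬ q = k) = (K.filter fun q => ¬ q = k) := rfl
  -- put everything together
  have hd1' : (1:ℝ) ≤ (N.searchDepth k : ℝ) := by exact_mod_cast hd1
  have hdpos : (0:ℝ) < (N.searchDepth k : ℝ) := by linarith
  have hfin : w k * (N.searchDepth k : ℝ) ≤ w i * (N.searchDepth k : ℝ) := by linarith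
  exact le_of_mul_le_mul_right hfin hdpos
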